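/- Let A be a nonempty finite set and τ > 0. The softmax map with temperature τ is (1/τ)-Lipschitz continuous: for all q, q' ∈ ℝ^A, ‖softmax_τ(q) − softmax_τ(q')‖₂ ≤ (1/τ)·‖q − q'‖₂. -/

import Mathlib

open Finset

noncomputable instance stdSimplexNonempty {A : Type*} [Fintype A] [Nonempty A] :
    Nonempty (stdSimplex ℝ A) := by
  classical
  exact ⟨⟨Pi.single (Classical.arbitrary A) 1, single_mem_stdSimplex ℝ _⟩⟩

/-- Expected payoff `μᵀ R ν` of the matrix game `R` under mixed strategies `μ, ν`. -/
noncomputable def pay {A B : Type*} [Fintype A] [Fintype B]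
    (R : A → B → ℝ) (μ : A → ℝ) (ν : B → ℝ) : ℝ :=
  ∑ a, ∑ b, μ a * R a b * ν b

/-- Shannon entropy `H(μ) = -∑ μ(a) log μ(a)` (note `Real.log 0 = 0` in Mathlib). -/
noncomputable def entropy {A : Type*} [Fintype A] (μ : A → ℝ) : ℝ :=
  -∑ a, μ a * Real.log (μ a)

/-- The zero-sum matrix-game value `val(R) = max_{μ∈Δ(A)} min_{ν∈Δ(B)} μᵀ R ν`. -/
noncomputable def matVal {A B : Type*} [Fintype A] [Fintype B] [Nonempty A] [Nonempty B]
    (R : A → B → ℝ) : ℝ :=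
  ⨆ μ : stdSimplex ℝ A, ⨅ ν : stdSimplex ℝ B, pay R μ.1 ν.1

/-- The entropy-regularized value
`val̄(R) = max_{μ∈Δ(A)} min_{ν∈Δ(B)} { μᵀ R ν + τ₁ H(μ) - τ₂ H(ν) }`. -/
noncomputable def regVal {A B : Type*} [Fintype A] [Fintype B] [Nonempty A] [Nonempty B]
    (τ1 τ2 : ℝ) (R : A → B → ℝ) : ℝ :=
  ⨆ μ : stdSimplex ℝ A, ⨅ ν : stdSimplex ℝ B,
    pay R μ.1 ν.1 + τ1 * entropy μ.1 - τ2 * entropy ν.1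

/-- Softmax (smoothed best response) with temperature `τ`. -/
noncomputable def softmax {A : Type*} [Fintype A] (τ : ℝ) (q : A → ℝ) : A → ℝ :=
  fun a => Real.exp (q a / τ) / ∑ b, Real.exp (q b / τ)

/-- Maximum norm of a matrix: the maximum of the absolute values of its entries. -/
noncomputable def matMaxNorm {A B : Type*} [Fintype A] [Fintype B] [Nonempty A] [Nonempty B]
    (M : A → B → ℝ) : ℝ :=
  (Finset.univ (α := A × B)).sup' univ_nonempty (fun ab => |M ab.1 ab.2|)

/-- Sup norm of a vector. -/
noncomputable def vecSupNorm {A : Type*} [Fintype A] [Nonempty A] (q : A → ℝ) : ℝ :=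
  Finset.univ.sup' univ_nonempty (fun a => |q a|)

set_option linter.unusedSectionVars false
set_option linter.unusedVariables false

lemma key_ineq {A : Type*} [Fintype A] (p u : A → ℝ) (hp0 : ∀ a, 0 ≤ p a)
    (hp1 : ∑ a, p a = 1) :
    ∑ a, (p a * (u a - ∑ b, p b * u b)) ^ 2 ≤ ∑ a, (u a) ^ 2 := by
  set s := ∑ b, p b * u b with hs
  have hple : ∀ a, p a ≤ 1 := by
    intro a
    calc p a ≤ ∑ b, p b := Finset.single_le_sum (fun b _ => hp0 b) (Finset.mem_univ a)
    _ = 1 := hp1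
  have step1 : ∑ a, (p a * (u a - s)) ^ 2 ≤ ∑ a, p a * (u a - s) ^ 2 := by
    apply Finset.sum_le_sum
    intro a _
    nlinarith [mul_nonneg (mul_nonneg (hp0 a) (sub_nonneg.2 (hple a))) (sq_nonneg (u a - s))]
  have expand : ∑ a, p a * (u a - s) ^ 2 = (∑ a, p a * (u a) ^ 2) - s ^ 2 := by
    calc ∑ a, p a * (u a - s) ^ 2
        = ∑ a, (p a * (u a) ^ 2 - 2 * s * (p a * u a) + s ^ 2 * p a) :=
          Finset.sum_congr rfl (fun a _ => by ring)
      _ = (∑ a, p a * (u a) ^ 2) - 2 * s * (∑ a, p a * u a) + s ^ 2 * (∑ a, p a) := by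
          rw [Finset.sum_add_distrib, Finset.sum_sub_distrib, ← Finset.mul_sum, ← Finset.mul_sum]
      _ = (∑ a, p a * (u a) ^ 2) - s ^ 2 := by rw [hp1, ← hs]; ring
  have step3 : ∑ a, p a * (u a) ^ 2 ≤ ∑ a, (u a) ^ 2 := by
    apply Finset.sum_le_sum
    intro a _
    nlinarith [sq_nonneg (u a), hp0 a, hple a]
  nlinarith [sq_nonneg s]

section deriv
variable {A : Type*} [Fintype A] [Nonempty A]

lemma softmax_nonneg (τ : ℝ) (w : A → ℝ) (a : A) : 0 ≤ softmax τ w a :=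
  div_nonneg (Real.exp_pos _).le
    (Finset.sum_nonneg fun b _ => (Real.exp_pos _).le)

lemma softmax_sum (τ : ℝ) (w : A → ℝ) : ∑ a, softmax τ w a = 1 := by
  have hN : 0 < ∑ b, Real.exp (w b / τ) :=
    Finset.sum_pos (fun b _ => Real.exp_pos _) Finset.univ_nonempty
  unfold softmax
  rw [← Finset.sum_div, div_self hN.ne']

lemma softmax_hasDerivAt (τ : ℝ) (hτ : 0 < τ) (q q' : A → ℝ) (t : ℝ) (a : A) :
    HasDerivAt (fun t => softmax τ (fun b => q' b + t * (q b - q' b)) a)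
      (softmax τ (fun b => q' b + t * (q b - q' b)) a *
        ((q a - q' a) - ∑ b, softmax τ (fun b => q' b + t * (q b - q' b)) b * (q b - q' b)) / τ)
      t := by
  set u : A → ℝ := fun b => q b - q' b with hu
  set Q : ℝ → A → ℝ := fun t b => q' b + t * u b with hQ
  have hE : ∀ b, HasDerivAt (fun t => Real.exp (Q t b / τ))
      (Real.exp (Q t b / τ) * (u b / τ)) t := by
    intro b
    have h1 := ((((hasDerivAt_id t).mul_const (u b)).const_add (q' b)).div_const τ).exp
    simpa using h1
  have hN : HasDerivAt (fun t => ∑ b, Real.exp (Q t b / τ))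
      (∑ b, Real.exp (Q t b / τ) * (u b / τ)) t :=
    HasDerivAt.fun_sum (fun b _ => hE b)
  have hNpos : 0 < ∑ b, Real.exp (Q t b / τ) :=
    Finset.sum_pos (fun b _ => Real.exp_pos _) Finset.univ_nonempty
  have hdiv := (hE a).div hN hNpos.ne'
  refine hdiv.congr_deriv (Eq.symm ?_)
  unfold softmax
  set N := ∑ b, Real.exp (Q t b / τ) with hNdef
  have h1 : ∑ b, Real.exp (Q t b / τ) / N * u b = (∑ b, Real.exp (Q t b / τ) * u b) / N := by
    rw [Finset.sum_div]; exact Finset.sum_congr rfl fun b _ => by ring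
  have h2 : ∑ b, Real.exp (Q t b / τ) * (u b / τ) = (∑ b, Real.exp (Q t b / τ) * u b) / τ := by
    rw [Finset.sum_div]; exact Finset.sum_congr rfl fun b _ => by ring
  rw [h1, h2]
  field_simp
  ring
end deriv

theorem stmt_7 {A : Type*} [Fintype A] [Nonempty A] (τ : ℝ) (hτ : 0 < τ) (q q' : A → ℝ) :
    Real.sqrt (∑ a, (softmax τ q a - softmax τ q' a) ^ 2) ≤
      (1 / τ) * Real.sqrt (∑ a, (q a - q' a) ^ 2) := by
  classical
  set u : A → ℝ := fun b => q b - q' b with hu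
  set C : ℝ := (1 / τ) * Real.sqrt (∑ a, (u a) ^ 2) with hC
  set p : ℝ → A → ℝ := fun t => softmax τ (fun b => q' b + t * u b) with hp
  -- the path in Euclidean space
  set F : ℝ → EuclideanSpace ℝ A := fun t => (EuclideanSpace.equiv A ℝ).symm (p t) with hF
  set F' : ℝ → EuclideanSpace ℝ A :=
    fun t => (EuclideanSpace.equiv A ℝ).symm
      (fun a => p t a * (u a - ∑ b, p t b * u b) / τ) with hF'
  have hderiv : ∀ t : ℝ, HasDerivAt F (F' t) t := by
    intro t
    have hG : HasDerivAt p (fun a => p t a * (u a - ∑ b, p t b * u b) / τ) t :=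
      hasDerivAt_pi.2 fun a => softmax_hasDerivAt τ hτ q q' t a
    exact ((EuclideanSpace.equiv A ℝ).symm.toContinuousLinearMap.hasFDerivAt).comp_hasDerivAt t hG
  have hbound : ∀ t : ℝ, ‖F' t‖ ≤ C := by
    intro t
    rw [EuclideanSpace.norm_eq]
    have happ : ∀ a, (F' t) a = p t a * (u a - ∑ b, p t b * u b) / τ := fun a => rfl
    have : ∑ a, ‖(F' t) a‖ ^ 2 = (∑ a, (p t a * (u a - ∑ b, p t b * u b)) ^ 2) / τ ^ 2 := by
      rw [Finset.sum_div]
      refine Finset.sum_congr rfl fun a _ => ?_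
      rw [happ a, Real.norm_eq_abs, sq_abs, div_pow]
    rw [this]
    have hkey := key_ineq (p t) u (fun a => softmax_nonneg τ _ a) (softmax_sum τ _)
    calc Real.sqrt ((∑ a, (p t a * (u a - ∑ b, p t b * u b)) ^ 2) / τ ^ 2)
        ≤ Real.sqrt ((∑ a, (u a) ^ 2) / τ ^ 2) := by
          apply Real.sqrt_le_sqrt
          exact div_le_div_of_nonneg_right hkey (by positivity)
      _ = C := by
          rw [hC, show (∑ a, (u a) ^ 2) / τ ^ 2 = (1 / τ) ^ 2 * ∑ a, (u a) ^ 2 by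
            field_simp, Real.sqrt_mul (sq_nonneg _), Real.sqrt_sq (by positivity : (0:ℝ) ≤ 1 / τ)]
  have hmvt := Convex.norm_image_sub_le_of_norm_hasDerivWithin_le
    (f := F) (f' := F') (s := Set.univ)
    (fun x _ => (hderiv x).hasDerivWithinAt) (fun x _ => hbound x) convex_univ
    (Set.mem_univ (0 : ℝ)) (Set.mem_univ (1 : ℝ))
  have hq1 : (fun b => q' b + 1 * u b) = q := by funext b; simp [hu]
  have hq0 : (fun b => q' b + 0 * u b) = q' := by funext b; simp
  have hnorm : ‖F 1 - F 0‖ = Real.sqrt (∑ a, (softmax τ q a - softmax τ q' a) ^ 2) := by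
    rw [EuclideanSpace.norm_eq]
    congr 1
    refine Finset.sum_congr rfl fun a _ => ?_
    have : (F 1 - F 0) a = softmax τ q a - softmax τ q' a := by
      have : (F 1 - F 0) a = F 1 a - F 0 a := rfl
      rw [this]
      show softmax τ (fun b => q' b + 1 * u b) a - softmax τ (fun b => q' b + 0 * u b) a = _
      rw [hq1, hq0]
    rw [this, Real.norm_eq_abs, sq_abs]
  rw [hnorm] at hmvt
  simpa using hmvt
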